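/- Let C ⊂ ℝ^{N+1} be an open convex cone containing no lines, with bounded cross section D and basepoint b ∈ D. If a sequence (x_n) in C converges pointwise in the Hilbert sense to a horofunction h (i.e., Hil_C(·,x_n) − Hil_C(b,x_n) → h pointwise on C, with h not of the form Hil_C(·,p) − Hil_C(b,p)), then h can be written as h = ψ_x + f where x ∈ ∂C∖{0}, ψ_x := r_C(·,x) − r_C(b,x) is a reverse-Funk horofunction, and f is a limit in the Funk sense of a subsequence of (x_n) converging in the usual sense to x. -/

import Mathlib

open Set Filter Topology

variable {V : Type*} [NormedAddCommGroup V] [NormedSpace ℝ V] [FiniteDimensional ℝ V]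

/-- An open cone: non-empty, open, convex, invariant under positive scaling, not containing 0. -/
def IsOpenCone (T : Set V) : Prop :=
  T.Nonempty ∧ IsOpen T ∧ Convex ℝ T ∧ (∀ c : ℝ, 0 < c → ∀ u ∈ T, c • u ∈ T) ∧ (0 : V) ∉ T

/-- The gauge `M_T(y/x) = inf {λ > 0 : λ • x - y ∈ closure T}`. -/
noncomputable def funkM (T : Set V) (y x : V) : ℝ :=
  sInf {l : ℝ | 0 < l ∧ l • x - y ∈ closure T}

/-- The Funk metric `F_T(x,y) = log inf {λ > 0 : λ • y - x ∈ closure T}`. -/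
noncomputable def funkF (T : Set V) (x y : V) : ℝ := Real.log (funkM T x y)

/-- The reverse Funk metric `r_T(x,y) = F_T(y,x)`. -/
noncomputable def revF (T : Set V) (x y : V) : ℝ := Real.log (funkM T y x)

/-- The Hilbert metric as the symmetrisation of the Funk metric. -/
noncomputable def hilD (T : Set V) (x y : V) : ℝ := funkF T x y + revF T x y

/-- The dual cone, as a set of continuous linear functionals. -/
def dualCone (T : Set V) : Set (V →L[ℝ] ℝ) := {z | ∀ u ∈ T, 0 ≤ z u}

/-- The open tangent cone `τ(T,x) = {λ (w - x) : λ > 0, w ∈ T}`. -/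
def openTangent (T : Set V) (x : V) : Set V :=
  {v | ∃ l : ℝ, 0 < l ∧ ∃ w ∈ T, v = l • (w - x)}

set_option linter.unusedSectionVars false
set_option maxHeartbeats 800000

variable {C : Set V}

lemma smul_mem_clC (hC : IsOpenCone C) {c : ℝ} (hc : 0 < c) {v : V} (hv : v ∈ closure C) :
    c • v ∈ closure C := by
  have hm : MapsTo (fun x : V => c • x) C C := fun u hu => hC.2.2.2.1 c hc u hu
  exact hm.closure (continuous_const_smul c) hv

lemma add_mem_clC (hC : IsOpenCone C) {v w : V} (hv : v ∈ closure C) (hw : w ∈ closure C) :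
    v + w ∈ closure C := by
  have hconv := hC.2.2.1.closure
  have hmid : (1/2 : ℝ) • v + (1/2 : ℝ) • w ∈ closure C :=
    hconv hv hw (by norm_num) (by norm_num) (by norm_num)
  have h2 := smul_mem_clC hC (by norm_num : (0:ℝ) < 2) hmid
  have : (2:ℝ) • ((1/2 : ℝ) • v + (1/2 : ℝ) • w) = v + w := by
    rw [smul_add, smul_smul, smul_smul]; norm_num
  rwa [this] at h2

lemma combo_mem_clC (hC : IsOpenCone C) {a b : ℝ} (ha : 0 < a) (hb : 0 < b)
    {v w : V} (hv : v ∈ closure C) (hw : w ∈ closure C) :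
    a • v + b • w ∈ closure C :=
  add_mem_clC hC (smul_mem_clC hC ha hv) (smul_mem_clC hC hb hw)

/-- The defining set for `funkM C z u` as a function of `z`. -/
lemma Aset_nonempty (hC : IsOpenCone C) {u : V} (hu : u ∈ C) (z : V) :
    {l : ℝ | 0 < l ∧ l • u - z ∈ closure C}.Nonempty := by
  obtain ⟨ε, hε, hball⟩ := Metric.isOpen_iff.1 hC.2.1 u hu
  set l : ℝ := ‖z‖ / ε + 1 with hl
  have hl0 : 0 < l := by positivity
  refine ⟨l, hl0, subset_closure ?_⟩
  have hmem : u - l⁻¹ • z ∈ Metric.ball u ε := by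
    simp only [Metric.mem_ball, dist_eq_norm]
    have heq2 : u - l⁻¹ • z - u = -(l⁻¹ • z) := by abel
    rw [heq2, norm_neg, norm_smul, Real.norm_eq_abs, abs_of_pos (by positivity)]
    rw [inv_mul_lt_iff₀ hl0, hl]
    have : (‖z‖ / ε + 1) * ε = ‖z‖ + ε := by field_simp
    rw [this]; linarith [norm_nonneg z]
  have := hC.2.2.2.1 l hl0 _ (hball hmem)
  have heq : l • (u - l⁻¹ • z) = l • u - z := by
    rw [smul_sub, smul_smul, mul_inv_cancel₀ (ne_of_gt hl0), one_smul]
  rwa [heq] at this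

lemma Aset_bddBelow (u z : V) : BddBelow {l : ℝ | 0 < l ∧ l • u - z ∈ closure C} :=
  ⟨0, fun l hl => le_of_lt hl.1⟩

lemma funkM_nonneg (u z : V) : 0 ≤ funkM C z u :=
  Real.sInf_nonneg (fun l hl => le_of_lt hl.1)

lemma funkM_convexOn (hC : IsOpenCone C) {u : V} (hu : u ∈ C) :
    ConvexOn ℝ univ (fun z => funkM C z u) := by
  refine ⟨convex_univ, fun z1 _ z2 _ a b ha hb hab => ?_⟩
  rcases ha.eq_or_lt with rfl | ha'
  · obtain rfl : b = 1 := by linarith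
    simp
  rcases hb.eq_or_lt with rfl | hb'
  · obtain rfl : a = 1 := by linarith
    simp
  show funkM C (a • z1 + b • z2) u ≤ a • funkM C z1 u + b • funkM C z2 u
  simp only [smul_eq_mul]
  refine le_of_forall_pos_le_add (fun ε hε => ?_)
  have hε2 : 0 < ε / 2 := by positivity
  obtain ⟨l1, hl1, hl1'⟩ := Real.lt_sInf_add_pos (Aset_nonempty hC hu z1) hε2
  obtain ⟨l2, hl2, hl2'⟩ := Real.lt_sInf_add_pos (Aset_nonempty hC hu z2) hε2
  have hmem : a * l1 + b * l2 ∈ {l : ℝ | 0 < l ∧ l • u - (a • z1 + b • z2) ∈ closure C} := by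
    constructor
    · exact add_pos (mul_pos ha' hl1.1) (mul_pos hb' hl2.1)
    · have : (a * l1 + b * l2) • u - (a • z1 + b • z2)
          = a • (l1 • u - z1) + b • (l2 • u - z2) := by module
      rw [this]
      exact combo_mem_clC hC ha' hb' hl1.2 hl2.2
  have h1 : funkM C (a • z1 + b • z2) u ≤ a * l1 + b * l2 :=
    csInf_le (Aset_bddBelow u _) hmem
  have : a * l1 + b * l2 ≤ a * funkM C z1 u + b * funkM C z2 u + ε := by
    have e1 : a * l1 ≤ a * (funkM C z1 u + ε / 2) := by
      exact mul_le_mul_of_nonneg_left (le_of_lt hl1') ha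
    have e2 : b * l2 ≤ b * (funkM C z2 u + ε / 2) := by
      exact mul_le_mul_of_nonneg_left (le_of_lt hl2') hb
    nlinarith
  linarith

lemma funkM_continuous (hC : IsOpenCone C) {u : V} (hu : u ∈ C) :
    Continuous (fun z => funkM C z u) := by
  have := (funkM_convexOn hC hu).continuousOn isOpen_univ
  exact continuousOn_univ.1 this

lemma funkM_pos (hC : IsOpenCone C)
    (hlines : ∀ v, v ∈ closure C → -v ∈ closure C → v = 0)
    {u : V} (hu : u ∈ C) {z : V} (hz : z ∈ closure C) (hz0 : z ≠ 0) :
    0 < funkM C z u := by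
  rcases (funkM_nonneg u z).lt_or_eq with h | h
  · exact h
  exfalso
  have hne := Aset_nonempty hC hu z
  have hch : ∀ n : ℕ, ∃ l ∈ {l : ℝ | 0 < l ∧ l • u - z ∈ closure C}, l < 1 / (n + 1) := by
    intro n
    obtain ⟨l, hl, hl'⟩ := Real.lt_sInf_add_pos hne (show (0:ℝ) < 1 / (n+1) by positivity)
    have h0 : sInf {l : ℝ | 0 < l ∧ l • u - z ∈ closure C} = 0 := h.symm
    rw [h0, zero_add] at hl'
    exact ⟨l, hl, hl'⟩
  choose ls hls hls' using hch
  have htend : Tendsto ls atTop (𝓝 0) := by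
    refine tendsto_of_tendsto_of_tendsto_of_le_of_le tendsto_const_nhds
      tendsto_one_div_add_atTop_nhds_zero_nat (fun n => le_of_lt (hls n).1)
      (fun n => le_of_lt (hls' n))
  have htend2 : Tendsto (fun n => ls n • u - z) atTop (𝓝 (-z)) := by
    have := (htend.smul_const u).sub_const z
    simpa using this
  have hmz : -z ∈ closure C :=
    isClosed_closure.mem_of_tendsto htend2 (Eventually.of_forall (fun n => (hls n).2))
  exact hz0 (hlines z hz hmz)



/-- `B_u(z) = {m > 0 : z - m•u ∈ cl C}`. -/
lemma Bset_nonempty (hC : IsOpenCone C) (u : V) {z : V} (hz : z ∈ C) :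
    {m : ℝ | 0 < m ∧ z - m • u ∈ closure C}.Nonempty := by
  obtain ⟨ε, hε, hball⟩ := Metric.isOpen_iff.1 hC.2.1 z hz
  set m : ℝ := ε / (2 * (‖u‖ + 1)) with hm
  have hm0 : 0 < m := by positivity
  refine ⟨m, hm0, subset_closure (hball ?_)⟩
  simp only [Metric.mem_ball, dist_eq_norm]
  have heq : z - m • u - z = -(m • u) := by abel
  rw [heq, norm_neg, norm_smul, Real.norm_eq_abs, abs_of_pos hm0, hm]
  rw [div_mul_eq_mul_div, div_lt_iff₀ (by positivity)]
  nlinarith [norm_nonneg u]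

lemma Bset_bddAbove (hC : IsOpenCone C)
    (hlines : ∀ v, v ∈ closure C → -v ∈ closure C → v = 0)
    {u : V} (hu : u ∈ C) (z : V) :
    BddAbove {m : ℝ | 0 < m ∧ z - m • u ∈ closure C} := by
  by_contra hbd
  have hch : ∀ n : ℕ, ∃ m ∈ {m : ℝ | 0 < m ∧ z - m • u ∈ closure C}, (n : ℝ) < m := by
    intro n
    rcases not_bddAbove_iff.1 hbd (n : ℝ) with ⟨m, hm, hm'⟩
    exact ⟨m, hm, hm'⟩
  choose ms hms hms' using hch
  have hmstop : Tendsto ms atTop atTop :=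
    tendsto_atTop_mono (fun n => le_of_lt (hms' n)) tendsto_natCast_atTop_atTop
  have hinv : Tendsto (fun n => (ms n)⁻¹) atTop (𝓝 0) := hmstop.inv_tendsto_atTop
  have hmem : ∀ n, (ms n)⁻¹ • z - u ∈ closure C := by
    intro n
    have h1 := smul_mem_clC hC (inv_pos.2 (hms n).1) (hms n).2
    have : (ms n)⁻¹ • (z - ms n • u) = (ms n)⁻¹ • z - u := by
      rw [smul_sub, smul_smul, inv_mul_cancel₀ (ne_of_gt (hms n).1), one_smul]
    rwa [this] at h1
  have htend : Tendsto (fun n => (ms n)⁻¹ • z - u) atTop (𝓝 (-u)) := by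
    have := (hinv.smul_const z).sub_const u
    simpa using this
  have hmu : -u ∈ closure C := isClosed_closure.mem_of_tendsto htend (Eventually.of_forall hmem)
  have := hlines u (subset_closure hu) hmu
  rw [this] at hu
  exact hC.2.2.2.2 hu

lemma sSup_Bset_pos (hC : IsOpenCone C)
    (hlines : ∀ v, v ∈ closure C → -v ∈ closure C → v = 0)
    {u : V} (hu : u ∈ C) {z : V} (hz : z ∈ C) :
    0 < sSup {m : ℝ | 0 < m ∧ z - m • u ∈ closure C} := by
  obtain ⟨m, hm⟩ := Bset_nonempty hC u hz
  exact lt_of_lt_of_le hm.1 (le_csSup (Bset_bddAbove hC hlines hu z) hm)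

lemma sSup_Bset_concave (hC : IsOpenCone C)
    (hlines : ∀ v, v ∈ closure C → -v ∈ closure C → v = 0)
    {u : V} (hu : u ∈ C) :
    ConcaveOn ℝ {z : V | {m : ℝ | 0 < m ∧ z - m • u ∈ closure C}.Nonempty}
      (fun z => sSup {m : ℝ | 0 < m ∧ z - m • u ∈ closure C}) := by
  have hcvx : Convex ℝ {z : V | {m : ℝ | 0 < m ∧ z - m • u ∈ closure C}.Nonempty} := by
    intro z1 hz1 z2 hz2 a b ha hb hab
    rcases ha.eq_or_lt with rfl | ha'
    · obtain rfl : b = 1 := by linarith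
      simpa using hz2
    rcases hb.eq_or_lt with rfl | hb'
    · obtain rfl : a = 1 := by linarith
      simpa using hz1
    obtain ⟨m1, hm1⟩ := hz1
    obtain ⟨m2, hm2⟩ := hz2
    refine ⟨a * m1 + b * m2, add_pos (mul_pos ha' hm1.1) (mul_pos hb' hm2.1), ?_⟩
    have : a • z1 + b • z2 - (a * m1 + b * m2) • u
        = a • (z1 - m1 • u) + b • (z2 - m2 • u) := by module
    rw [this]
    exact combo_mem_clC hC ha' hb' hm1.2 hm2.2
  refine ⟨hcvx, fun z1 hz1 z2 hz2 a b ha hb hab => ?_⟩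
  rcases ha.eq_or_lt with rfl | ha'
  · obtain rfl : b = 1 := by linarith
    simp
  rcases hb.eq_or_lt with rfl | hb'
  · obtain rfl : a = 1 := by linarith
    simp
  show a • sSup {m : ℝ | 0 < m ∧ z1 - m • u ∈ closure C}
      + b • sSup {m : ℝ | 0 < m ∧ z2 - m • u ∈ closure C}
      ≤ sSup {m : ℝ | 0 < m ∧ (a • z1 + b • z2) - m • u ∈ closure C}
  simp only [smul_eq_mul]
  refine le_of_forall_pos_le_add (fun ε hε => ?_)
  have hε2 : 0 < ε / 2 := by positivity
  obtain ⟨m1, hm1, hm1'⟩ := Real.add_neg_lt_sSup hz1 (show -(ε/2) < 0 by linarith)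
  obtain ⟨m2, hm2, hm2'⟩ := Real.add_neg_lt_sSup hz2 (show -(ε/2) < 0 by linarith)
  have hmem : a * m1 + b * m2 ∈ {m : ℝ | 0 < m ∧ (a • z1 + b • z2) - m • u ∈ closure C} := by
    refine ⟨add_pos (mul_pos ha' hm1.1) (mul_pos hb' hm2.1), ?_⟩
    have : a • z1 + b • z2 - (a * m1 + b * m2) • u
        = a • (z1 - m1 • u) + b • (z2 - m2 • u) := by module
    rw [this]
    exact combo_mem_clC hC ha' hb' hm1.2 hm2.2
  have h1 : a * m1 + b * m2 ≤ sSup {m : ℝ | 0 < m ∧ (a • z1 + b • z2) - m • u ∈ closure C} :=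
    le_csSup (Bset_bddAbove hC hlines hu _) hmem
  have e1 : a * (sSup {m : ℝ | 0 < m ∧ z1 - m • u ∈ closure C} - ε/2) ≤ a * m1 := by
    have := hm1'
    nlinarith
  have e2 : b * (sSup {m : ℝ | 0 < m ∧ z2 - m • u ∈ closure C} - ε/2) ≤ b * m2 := by
    have := hm2'
    nlinarith
  nlinarith

lemma funkM_eq_inv_sSup (hC : IsOpenCone C)
    (hlines : ∀ v, v ∈ closure C → -v ∈ closure C → v = 0)
    {u : V} (hu : u ∈ C) {z : V} (hz : z ∈ C) :
    funkM C u z = (sSup {m : ℝ | 0 < m ∧ z - m • u ∈ closure C})⁻¹ := by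
  set B := {m : ℝ | 0 < m ∧ z - m • u ∈ closure C} with hB
  set S := sSup B with hS
  have hSpos : 0 < S := sSup_Bset_pos hC hlines hu hz
  have hBne : B.Nonempty := Bset_nonempty hC u hz
  have hBbdd : BddAbove B := Bset_bddAbove hC hlines hu z
  have hiff : ∀ l : ℝ, 0 < l → ((l • z - u ∈ closure C) ↔ l⁻¹ ∈ B) := by
    intro l hl
    constructor
    · intro hmem
      refine ⟨inv_pos.2 hl, ?_⟩
      have h1 := smul_mem_clC hC (inv_pos.2 hl) hmem
      have : l⁻¹ • (l • z - u) = z - l⁻¹ • u := by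
        rw [smul_sub, smul_smul, inv_mul_cancel₀ (ne_of_gt hl), one_smul]
      rwa [this] at h1
    · intro hmem
      have h1 := smul_mem_clC hC hl hmem.2
      have : l • (z - l⁻¹ • u) = l • z - u := by
        rw [smul_sub, smul_smul, mul_inv_cancel₀ (ne_of_gt hl), one_smul]
      rwa [this] at h1
  have hAne : {l : ℝ | 0 < l ∧ l • z - u ∈ closure C}.Nonempty := by
    obtain ⟨m, hm⟩ := hBne
    refine ⟨m⁻¹, inv_pos.2 hm.1, ?_⟩
    rw [hiff m⁻¹ (inv_pos.2 hm.1), inv_inv]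
    exact hm
  refine le_antisymm ?_ ?_
  · -- sInf A ≤ S⁻¹
    refine le_of_forall_pos_le_add (fun δ hδ => ?_)
    set ε : ℝ := min (S/2) (δ * S^2 / 2) with hε
    have hεpos : 0 < ε := lt_min (by positivity) (by positivity)
    obtain ⟨m, hm, hm'⟩ := Real.add_neg_lt_sSup hBne (show -ε < 0 by linarith)
    have hmS : S - ε < m := by linarith
    have hSε : 0 < S - ε := by
      have : ε ≤ S/2 := min_le_left _ _
      linarith
    have hminv : m⁻¹ ∈ {l : ℝ | 0 < l ∧ l • z - u ∈ closure C} := by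
      refine ⟨inv_pos.2 hm.1, ?_⟩
      rw [hiff m⁻¹ (inv_pos.2 hm.1), inv_inv]
      exact hm
    have h1 : funkM C u z ≤ m⁻¹ := csInf_le ⟨0, fun l hl => le_of_lt hl.1⟩ hminv
    have h2 : m⁻¹ ≤ (S - ε)⁻¹ := by
      apply inv_anti₀ hSε (le_of_lt hmS)
    have h3 : (S - ε)⁻¹ ≤ S⁻¹ + δ := by
      rw [inv_eq_one_div, div_le_iff₀ hSε]
      have hS1 : S⁻¹ * S = 1 := inv_mul_cancel₀ (ne_of_gt hSpos)
      have hεb : ε ≤ δ * S^2 / 2 := min_le_right _ _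
      have hεa : ε ≤ S/2 := min_le_left _ _
      have hinvnn : 0 ≤ S⁻¹ := le_of_lt (inv_pos.2 hSpos)
      have hkey : ε * S⁻¹ ≤ δ * S / 2 := by
        have := mul_le_mul_of_nonneg_right hεb hinvnn
        have hss : δ * S^2 / 2 * S⁻¹ = δ * S / 2 := by
          field_simp
        rw [hss] at this
        exact this
      nlinarith
    linarith
  · -- S⁻¹ ≤ sInf A
    refine le_csInf hAne (fun l hl => ?_)
    have hlB : l⁻¹ ∈ B := (hiff l hl.1).1 hl.2
    have : l⁻¹ ≤ S := le_csSup hBbdd hlB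
    have := inv_anti₀ (inv_pos.2 hl.1) this
    rwa [inv_inv] at this







lemma revF_contAt (hC : IsOpenCone C)
    (hlines : ∀ v, v ∈ closure C → -v ∈ closure C → v = 0)
    {u : V} (hu : u ∈ C) {x : V} (hx : x ∈ closure C) (hx0 : x ≠ 0) :
    ContinuousAt (fun z => revF C u z) x := by
  have hg := funkM_continuous hC hu
  have hpos := funkM_pos hC hlines hu hx hx0
  exact hg.continuousAt.log (ne_of_gt hpos)

lemma funkF_contAt (hC : IsOpenCone C)
    (hlines : ∀ v, v ∈ closure C → -v ∈ closure C → v = 0)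
    {u : V} (hu : u ∈ C) {x : V} (hx : x ∈ C) :
    ContinuousAt (fun z => funkF C u z) x := by
  set dom := {z : V | {m : ℝ | 0 < m ∧ z - m • u ∈ closure C}.Nonempty} with hdom
  set s := fun z : V => sSup {m : ℝ | 0 < m ∧ z - m • u ∈ closure C} with hs
  have hCdom : C ⊆ dom := fun z hz => Bset_nonempty hC u hz
  have hxint : x ∈ interior dom := interior_maximal hCdom hC.2.1 hx
  have hscont : ContinuousAt s x :=
    ((sSup_Bset_concave hC hlines hu).continuousOn_interior).continuousAt
      (isOpen_interior.mem_nhds hxint)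
  have hspos : 0 < s x := sSup_Bset_pos hC hlines hu hx
  have hgood : ContinuousAt (fun z => Real.log (s z)⁻¹) x := by
    have h1 : ContinuousAt (fun z => (s z)⁻¹) x := hscont.inv₀ (ne_of_gt hspos)
    exact h1.log (inv_ne_zero (ne_of_gt hspos))
  refine hgood.congr ?_
  filter_upwards [hC.2.1.mem_nhds hx] with z hz
  show Real.log (s z)⁻¹ = funkF C u z
  rw [funkF, funkM_eq_inv_sSup hC hlines hu hz]

/-- every Hilbert-geometry horofunction splits as the sum of a reverse-Funk
horofunction `ψ_x` and a Funk limit `f` along a subsequence converging to `x ∈ ∂C∖{0}`. -/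
theorem hilbert_horofunction_splits (C : Set V) (hC : IsOpenCone C)
    (hlines : ∀ v, v ∈ closure C → -v ∈ closure C → v = 0)
    (ψ : V →L[ℝ] ℝ) (hψ : ∀ u ∈ closure C, u ≠ 0 → 0 < ψ u)
    (D : Set V) (hD : D = {u | u ∈ C ∧ ψ u = 1}) (hDc : IsCompact (closure D))
    (b : V) (hb : b ∈ D)
    (xs : ℕ → V) (hxs : ∀ n, xs n ∈ D) (h : V → ℝ)
    (hconv : ∀ u ∈ C, Tendsto (fun n => hilD C u (xs n) - hilD C b (xs n)) atTop (𝓝 (h u)))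
    (hhoro : ¬ ∃ p ∈ C, ∀ u ∈ C, h u = hilD C u p - hilD C b p) :
    ∃ x, x ∈ frontier C ∧ x ≠ 0 ∧ ∃ f : V → ℝ, ∃ φ : ℕ → ℕ, StrictMono φ ∧
      Tendsto (xs ∘ φ) atTop (𝓝 x) ∧
      (∀ u ∈ C, Tendsto (fun k => funkF C u (xs (φ k)) - funkF C b (xs (φ k))) atTop
          (𝓝 (f u))) ∧
      (∀ u ∈ C, h u = (revF C u x - revF C b x) + f u) := by
  have hCopen := hC.2.1
  have hDsub : D ⊆ C := by rw [hD]; exact fun u hu => hu.1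
  have hbC : b ∈ C := hDsub hb
  obtain ⟨x, hxclD, φ, hφ, hφtend⟩ := hDc.tendsto_subseq (fun n => subset_closure (hxs n))
  have hxclC : x ∈ closure C := closure_mono hDsub hxclD
  have hψx : ψ x = 1 := by
    have hcl : closure D ⊆ {u : V | ψ u = 1} :=
      closure_minimal (by rw [hD]; exact fun u hu => hu.2)
        (isClosed_eq ψ.continuous continuous_const)
    exact hcl hxclD
  have hx0 : x ≠ 0 := by intro h0; rw [h0] at hψx; simp at hψx
  have hrev : ∀ u ∈ C, Tendsto (fun k => revF C u (xs (φ k)) - revF C b (xs (φ k))) atTop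
      (𝓝 (revF C u x - revF C b x)) := by
    intro u hu
    have h1 : Tendsto (fun k => revF C u (xs (φ k))) atTop (𝓝 (revF C u x)) :=
      ((revF_contAt hC hlines hu hxclC hx0).tendsto).comp hφtend
    have h2 : Tendsto (fun k => revF C b (xs (φ k))) atTop (𝓝 (revF C b x)) :=
      ((revF_contAt hC hlines hbC hxclC hx0).tendsto).comp hφtend
    exact h1.sub h2
  have hhil : ∀ u ∈ C, Tendsto (fun k => hilD C u (xs (φ k)) - hilD C b (xs (φ k))) atTop
      (𝓝 (h u)) := fun u hu => (hconv u hu).comp hφ.tendsto_atTop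
  have hfunk : ∀ u ∈ C, Tendsto (fun k => funkF C u (xs (φ k)) - funkF C b (xs (φ k))) atTop
      (𝓝 (h u - (revF C u x - revF C b x))) := by
    intro u hu
    have hsub := (hhil u hu).sub (hrev u hu)
    refine hsub.congr (fun k => ?_)
    simp only [hilD]; ring
  have hxnotC : x ∉ C := by
    intro hxC
    refine hhoro ⟨x, hxC, fun u hu => ?_⟩
    have hfu : Tendsto (fun k => funkF C u (xs (φ k)) - funkF C b (xs (φ k))) atTop
        (𝓝 (funkF C u x - funkF C b x)) := by
      have h1 : Tendsto (fun k => funkF C u (xs (φ k))) atTop (𝓝 (funkF C u x)) :=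
        ((funkF_contAt hC hlines hu hxC).tendsto).comp hφtend
      have h2 : Tendsto (fun k => funkF C b (xs (φ k))) atTop (𝓝 (funkF C b x)) :=
        ((funkF_contAt hC hlines hbC hxC).tendsto).comp hφtend
      exact h1.sub h2
    have heq := tendsto_nhds_unique (hfunk u hu) hfu
    simp only [hilD]
    linarith
  refine ⟨x, ?_, hx0, fun u => h u - (revF C u x - revF C b x), φ, hφ, hφtend,
    fun u hu => hfunk u hu, fun u hu => by ring⟩
  rw [hCopen.frontier_eq]
  exact ⟨hxclC, hxnotC⟩
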